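/- Fix c ∈ ℝ and define Ψ : ℝ³ → ℝ by Ψ(x) = ∫_c^{φ_x} a(t) dt. Then for every x ∈ ℝ³ with x ≠ 0, Ψ has gradient A(x) at x (in the sense of HasGradientAt). In particular the eikonal equation ⟨ξ, ∇Ψ(x) − A(x)⟩ = 0 holds for every ξ ∈ ℝ³ and every x ≠ 0. -/

import Mathlib

open Real MeasureTheory Filter
open scoped RealInnerProductSpace Topology

noncomputable section

/-- `ℝ³` as a Euclidean space. -/
abbrev E3 := EuclideanSpace ℝ (Fin 3)

/-- The colatitude `φ_x = arccos(x₃/|x|)` of a point of `ℝ³`. -/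
def colat (x : E3) : ℝ := Real.arccos (x 2 / ‖x‖)

/-- The unit vector `e_{φ_x}` of spherical coordinates. -/
def ephi (x : E3) : E3 :=
  (1 / ‖x‖) • (WithLp.equiv 2 (Fin 3 → ℝ)).symm
    ![x 0 * x 2 / Real.sqrt ((x 0)^2 + (x 1)^2),
      x 1 * x 2 / Real.sqrt ((x 0)^2 + (x 1)^2),
      - Real.sqrt ((x 0)^2 + (x 1)^2)]

/-- The magnetic potential `A(x) = (a(φ_x)/|x|) e_{φ_x}` (set to `0` on the `x₃`-axis). -/
def magA (a : ℝ → ℝ) (x : E3) : E3 :=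
  if 0 < (x 0)^2 + (x 1)^2 then (a (colat x) / ‖x‖) • ephi x else 0

lemma norm_sq_E3 (x : E3) : ‖x‖ ^ 2 = (x 0)^2 + (x 1)^2 + (x 2)^2 := by
  rw [← real_inner_self_eq_norm_sq]
  simp only [PiLp.inner_apply, RCLike.inner_apply, conj_trivial, Fin.sum_univ_three]
  ring

/-- Fréchet derivative of the norm on `ℝ³` away from the origin. -/
lemma hasFDerivAt_norm_E3 (x : E3) (hx : x ≠ 0) :
    HasFDerivAt (fun y : E3 => ‖y‖) (‖x‖⁻¹ • innerSL ℝ x) x := by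
  have hn : ‖x‖ ≠ 0 := norm_ne_zero_iff.mpr hx
  have hxx : ⟪x, x⟫ ≠ 0 := by
    rw [real_inner_self_eq_norm_sq]; positivity
  have h1 : HasFDerivAt (fun y : E3 => ⟪y, y⟫)
      ((fderivInnerCLM ℝ (x, x)).comp
        ((ContinuousLinearMap.id ℝ E3).prod (ContinuousLinearMap.id ℝ E3))) x :=
    (hasFDerivAt_id x).inner ℝ (hasFDerivAt_id x)
  have h2 : HasDerivAt Real.sqrt (1 / (2 * Real.sqrt ⟪x, x⟫)) ⟪x, x⟫ :=
    Real.hasDerivAt_sqrt hxx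
  have h3 := h2.comp_hasFDerivAt (f := fun y : E3 => ⟪y, y⟫) x h1
  have key : Real.sqrt ∘ (fun y : E3 => ⟪y, y⟫) = fun y : E3 => ‖y‖ := by
    funext y
    simp only [Function.comp_apply]
    rw [real_inner_self_eq_norm_mul_norm, Real.sqrt_mul_self (norm_nonneg y)]
  rw [key] at h3
  refine h3.congr_fderiv ?_
  ext v
  simp only [ContinuousLinearMap.coe_smul', Pi.smul_apply, ContinuousLinearMap.coe_comp',
    Function.comp_apply, ContinuousLinearMap.prod_apply, ContinuousLinearMap.coe_id', id_eq,
    fderivInnerCLM_apply, innerSL_apply_apply, smul_eq_mul]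
  rw [real_inner_self_eq_norm_mul_norm, Real.sqrt_mul_self (norm_nonneg x),
    real_inner_comm v x]
  field_simp
  ring

/-- Gradient of the colatitude away from the `x₃`-axis. -/
lemma colat_hasGradientAt (x : E3) (hx : x ≠ 0) (hrho : 0 < (x 0)^2 + (x 1)^2) :
    HasGradientAt colat ((1 / ‖x‖) • ephi x) x := by
  have hr0 : 0 < ‖x‖ := norm_pos_iff.mpr hx
  have hr2 : ‖x‖ ^ 2 = (x 0)^2 + (x 1)^2 + (x 2)^2 := norm_sq_E3 x
  have hs0 : 0 < Real.sqrt ((x 0)^2 + (x 1)^2) := Real.sqrt_pos.mpr hrho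
  have hs2 : Real.sqrt ((x 0)^2 + (x 1)^2) ^ 2 = (x 0)^2 + (x 1)^2 :=
    Real.sq_sqrt hrho.le
  have hx2 : (x 2)^2 < ‖x‖^2 := by rw [hr2]; linarith
  have habs : (x 2 * ‖x‖⁻¹)^2 < 1 := by
    rw [mul_pow]
    rw [show (‖x‖⁻¹)^2 = (‖x‖^2)⁻¹ by rw [inv_pow]]
    rw [← div_eq_mul_inv, div_lt_one (by positivity)]
    exact hx2
  have hu1 : x 2 * ‖x‖⁻¹ ≠ 1 := by intro h; rw [h] at habs; norm_num at habs
  have hum1 : x 2 * ‖x‖⁻¹ ≠ -1 := by intro h; rw [h] at habs; norm_num at habs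
  have h1u : 1 - (x 2 * ‖x‖⁻¹)^2 = ((x 0)^2 + (x 1)^2) / ‖x‖^2 := by
    field_simp
    linarith
  have hsq : Real.sqrt (1 - (x 2 * ‖x‖⁻¹)^2) = Real.sqrt ((x 0)^2 + (x 1)^2) / ‖x‖ := by
    rw [h1u, show ((x 0)^2 + (x 1)^2) / ‖x‖^2
        = (Real.sqrt ((x 0)^2 + (x 1)^2) / ‖x‖)^2 by rw [div_pow, hs2],
      Real.sqrt_sq (by positivity)]
  have hnorm := hasFDerivAt_norm_E3 x hx
  have hinv := (hasDerivAt_inv hr0.ne').comp_hasFDerivAt (f := fun y : E3 => ‖y‖) x hnorm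
  have hproj : HasFDerivAt (fun y : E3 => y 2) (EuclideanSpace.proj (𝕜 := ℝ) (2 : Fin 3)) x :=
    by exact (EuclideanSpace.proj (𝕜 := ℝ) (2 : Fin 3)).hasFDerivAt
  have hmul := hproj.mul hinv
  have harccos : HasDerivAt Real.arccos (-(1 / Real.sqrt (1 - (x 2 * ‖x‖⁻¹)^2)))
      (x 2 * ‖x‖⁻¹) := Real.hasDerivAt_arccos hum1 hu1
  have hcomp := harccos.comp_hasFDerivAt (f := fun y : E3 => y 2 * ‖y‖⁻¹) x hmul
  have hkey : Real.arccos ∘ (fun y : E3 => y 2 * ‖y‖⁻¹) = colat := by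
    funext y; simp [colat, div_eq_mul_inv]
  rw [hkey] at hcomp
  rw [hasGradientAt_iff_hasFDerivAt]
  refine hcomp.congr_fderiv ?_
  ext v
  have hproj_apply : (EuclideanSpace.proj (𝕜 := ℝ) (2 : Fin 3)) v = v 2 := rfl
  simp only [ContinuousLinearMap.coe_smul', Pi.smul_apply, ContinuousLinearMap.add_apply,
    ContinuousLinearMap.coe_comp', Function.comp_apply, innerSL_apply_apply, smul_eq_mul,
    hproj_apply, InnerProductSpace.toDual_apply_apply]
  rw [hsq]
  rw [show ⟪x, v⟫ = x 0 * v 0 + x 1 * v 1 + x 2 * v 2 by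
    simp [PiLp.inner_apply, RCLike.inner_apply, Fin.sum_univ_three]; ring]
  rw [show ⟪(1 / ‖x‖) • ephi x, v⟫
      = (1/‖x‖) * ((1/‖x‖) * ((x 0 * x 2 / Real.sqrt ((x 0)^2 + (x 1)^2)) * v 0
        + (x 1 * x 2 / Real.sqrt ((x 0)^2 + (x 1)^2)) * v 1
        + (- Real.sqrt ((x 0)^2 + (x 1)^2)) * v 2)) by
    simp [ephi, PiLp.inner_apply, RCLike.inner_apply, Fin.sum_univ_three,
      PiLp.smul_apply, smul_eq_mul]
    ring]
  have hsum : Real.sqrt ((x 0)^2 + (x 1)^2) ^ 2 = ‖x‖^2 - (x 2)^2 := by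
    rw [hs2, hr2]; ring
  set s := Real.sqrt ((x 0)^2 + (x 1)^2) with hs_def
  field_simp
  linear_combination (v 2) * hsum

/-- The phase `Ψ(x) = ∫_c^{φ_x} a(t) dt` has gradient `A(x)` at every `x ≠ 0`. -/
lemma phase_hasGradientAt (a : ℝ → ℝ) (ha : ContDiff ℝ (⊤ : ℕ∞) a)
    (hsupp : tsupport a ⊆ Set.Ioo 0 Real.pi) (c : ℝ) (x : E3) (hx : x ≠ 0) :
    HasGradientAt (fun y : E3 => ∫ t in c..(colat y), a t) (magA a x) x := by
  have hcont : Continuous a := ha.continuous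
  by_cases hrho : 0 < (x 0)^2 + (x 1)^2
  · -- off the axis
    have hg := colat_hasGradientAt x hx hrho
    have hF : HasDerivAt (fun t => ∫ s in c..t, a s) (a (colat x)) (colat x) :=
      (hcont.integral_hasStrictDerivAt c (colat x)).hasDerivAt
    have h := hF.comp_hasFDerivAt x hg.hasFDerivAt
    rw [hasGradientAt_iff_hasFDerivAt]
    have heq : (InnerProductSpace.toDual ℝ E3) (magA a x)
        = a (colat x) • (InnerProductSpace.toDual ℝ E3) ((1 / ‖x‖) • ephi x) := by
      rw [← _root_.map_smul]
      congr 1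
      rw [magA, if_pos hrho, smul_smul]
      congr 1
      field_simp
    rw [heq]
    exact h
  · -- on the axis
    have hr0 : 0 < ‖x‖ := norm_pos_iff.mpr hx
    have hcolat01 : colat x = 0 ∨ colat x = Real.pi := by
      have h0 : (x 0)^2 + (x 1)^2 = 0 := le_antisymm (not_lt.mp hrho) (by positivity)
      have hx0 : x 0 = 0 := by nlinarith [sq_nonneg (x 0), sq_nonneg (x 1)]
      have hx1 : x 1 = 0 := by nlinarith [sq_nonneg (x 0), sq_nonneg (x 1)]
      have hr2 : ‖x‖^2 = (x 2)^2 := by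
        rw [← real_inner_self_eq_norm_sq]
        simp only [PiLp.inner_apply, RCLike.inner_apply, conj_trivial, Fin.sum_univ_three, hx0, hx1]
        ring
      have habs : ‖x‖ = |x 2| := by
        rw [← Real.sqrt_sq hr0.le, hr2, Real.sqrt_sq_eq_abs]
      have hx2 : |x 2| ≠ 0 := by rw [← habs]; exact hr0.ne'
      rcases abs_cases (x 2) with ⟨he, _⟩ | ⟨he, hneg⟩
      · left
        rw [colat, habs, he, div_self (by rw [← he]; exact hx2), Real.arccos_one]
      · right
        rw [colat, habs, he, div_neg, div_self hneg.ne, Real.arccos_neg_one]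
    have hnotin : colat x ∉ tsupport a := by
      intro hmem
      rcases hcolat01 with h | h <;> rw [h] at hmem
      · exact lt_irrefl 0 (hsupp hmem).1
      · exact lt_irrefl Real.pi (hsupp hmem).2
    obtain ⟨ε, hε, hball⟩ := Metric.isOpen_iff.mp (isClosed_tsupport a).isOpen_compl
      (colat x) hnotin
    have hccolat : ContinuousAt colat x := by
      apply Real.continuous_arccos.continuousAt.comp
      exact ((EuclideanSpace.proj (𝕜 := ℝ) (2 : Fin 3)).continuous.continuousAt).div
        continuous_norm.continuousAt hr0.ne'
    have hev : (fun y : E3 => ∫ t in c..(colat y), a t)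
        =ᶠ[𝓝 x] fun _ : E3 => ∫ t in c..(colat x), a t := by
      filter_upwards [hccolat.preimage_mem_nhds (Metric.ball_mem_nhds (colat x) hε)] with y hy
      have hsub : Set.uIcc (colat x) (colat y) ⊆ Metric.ball (colat x) ε :=
        (convex_ball (colat x) ε).ordConnected.uIcc_subset
          (Metric.mem_ball_self hε) hy
      have hzero : ∀ t ∈ Set.uIcc (colat x) (colat y), a t = 0 := fun t ht =>
        image_eq_zero_of_notMem_tsupport (hball (hsub ht))
      have hint : ∀ (u v : ℝ), IntervalIntegrable a volume u v := fun u v =>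
        hcont.intervalIntegrable u v
      have : (∫ t in c..(colat y), a t)
          = (∫ t in c..(colat x), a t) + ∫ t in (colat x)..(colat y), a t := by
        rw [intervalIntegral.integral_add_adjacent_intervals (hint _ _) (hint _ _)]
      rw [this, intervalIntegral.integral_congr (g := fun _ => (0:ℝ)) hzero,
        intervalIntegral.integral_zero, add_zero]
    rw [hasGradientAt_iff_hasFDerivAt]
    have h0 : magA a x = 0 := by rw [magA, if_neg hrho]
    rw [h0, _root_.map_zero]
    exact (hasFDerivAt_const _ _).congr_of_eventuallyEq hev

/-- For `Ψ(x) = ∫_c^{φ_x} a(t) dt`, at every `x ≠ 0` the function `Ψ` has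
gradient `A(x)`; in particular the eikonal equation `⟨ξ, ∇Ψ(x) − A(x)⟩ = 0` holds for every
`ξ ∈ ℝ³` and every `x ≠ 0`. -/
theorem gradient_phase_eq_A (a : ℝ → ℝ) (ha : ContDiff ℝ (⊤ : ℕ∞) a)
    (hpos : ∀ t, 0 ≤ a t) (hcs : HasCompactSupport a)
    (hsupp : tsupport a ⊆ Set.Ioo 0 Real.pi) (c : ℝ) :
    (∀ x : E3, x ≠ 0 →
        HasGradientAt (fun y : E3 => ∫ t in c..(colat y), a t) (magA a x) x) ∧
    (∀ (ξ x : E3), x ≠ 0 →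
        ⟪ξ, gradient (fun y : E3 => ∫ t in c..(colat y), a t) x - magA a x⟫ = 0) := by
  constructor
  · exact fun x hx => phase_hasGradientAt a ha hsupp c x hx
  · intro ξ x hx
    rw [(phase_hasGradientAt a ha hsupp c x hx).gradient, sub_self, inner_zero_right]
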